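/- Let X be a compact metric space with diam(X) < π/2, p > 1, and fix ν ∈ P_p(Susp(X)) supported on the equator X × {π/2}. Then max over μ ∈ P_p(Susp(X)) of W_p(ν,μ) equals π/2, and the maximizers are exactly the measures supported on {𝟎, 𝛑}, i.e., measures of the form (1-λ)δ_𝟎 + λδ_𝛑, λ ∈ [0,1]. -/

import Mathlib

open MeasureTheory

/-- An abstract presentation of the spherical suspension of a metric space `X`. -/
structure SuspensionOf (X : Type*) [MetricSpace X] (S : Type*) [MetricSpace S] where
  pt : X → ℝ → S
  surj : ∀ z : S, ∃ x : X, ∃ t ∈ Set.Icc (0 : ℝ) Real.pi, pt x t = z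
  dist_eq : ∀ (x y : X) (t s : ℝ), t ∈ Set.Icc (0 : ℝ) Real.pi →
    s ∈ Set.Icc (0 : ℝ) Real.pi →
    dist (pt x t) (pt y s) =
      Real.arccos (Real.cos t * Real.cos s +
        Real.sin t * Real.sin s * Real.cos (dist x y))

/-- The `p`-Wasserstein distance associated to a cost (distance) function `d`. -/
noncomputable def Wp {Z : Type*} [MeasurableSpace Z] (d : Z → Z → ℝ) (p : ℝ)
    (μ ν : Measure Z) : ℝ :=
  sInf {c : ℝ | ∃ γ : Measure (Z × Z), IsProbabilityMeasure γ ∧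
    γ.map Prod.fst = μ ∧ γ.map Prod.snd = ν ∧
    c = (∫ z, d z.1 z.2 ^ p ∂γ) ^ (1 / p)}

/-- For a probability measure `ν` supported on the equator `X × {π/2}` of `Susp(X)`,
the maximum of `W_p(ν,·)` over `P_p(Susp(X))` is `π/2`, attained exactly at the measures
supported on the vertices, i.e. measures of the form `(1-λ)δ_𝟎 + λδ_𝛑`, `λ ∈ [0,1]`. -/
theorem stmt_17 {X S : Type*} [MetricSpace X] [CompactSpace X] [Nonempty X]
    [MeasurableSpace X] [BorelSpace X]
    [MetricSpace S] [MeasurableSpace S] [BorelSpace S]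
    (hdiam : ∀ a b : X, dist a b < Real.pi / 2)
    (p : ℝ) (hp : 1 < p) (susp : SuspensionOf X S)
    (ν₀ : Measure X) [IsProbabilityMeasure ν₀] :
    (∀ μ : Measure S, IsProbabilityMeasure μ →
      Wp (fun a b : S => dist a b) p (ν₀.map (fun x : X => susp.pt x (Real.pi / 2))) μ ≤
        Real.pi / 2) ∧
    (∃ μ : Measure S, IsProbabilityMeasure μ ∧
      Wp (fun a b : S => dist a b) p (ν₀.map (fun x : X => susp.pt x (Real.pi / 2))) μ =
        Real.pi / 2) ∧
    (∀ μ : Measure S, IsProbabilityMeasure μ →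
      (Wp (fun a b : S => dist a b) p (ν₀.map (fun x : X => susp.pt x (Real.pi / 2))) μ =
          Real.pi / 2 ↔
        ∃ lam : ℝ, lam ∈ Set.Icc (0 : ℝ) 1 ∧
          μ = ENNReal.ofReal (1 - lam) •
                Measure.dirac (susp.pt (Classical.arbitrary X) 0) +
              ENNReal.ofReal lam •
                Measure.dirac (susp.pt (Classical.arbitrary X) Real.pi))) := by
  classical
  have hπ := Real.pi_pos
  have hp0 : (0:ℝ) < p := by linarith
  have hpne : p ≠ 0 := ne_of_gt hp0
  set x₀ : X := Classical.arbitrary X with hx₀def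
  set φ : X → S := fun x : X => susp.pt x (Real.pi / 2) with hφdef
  set O : S := susp.pt x₀ 0 with hOdef
  set P : S := susp.pt x₀ Real.pi with hPdef
  have hmemhalf : Real.pi / 2 ∈ Set.Icc (0:ℝ) Real.pi := ⟨by positivity, by linarith⟩
  have hmem0 : (0:ℝ) ∈ Set.Icc (0:ℝ) Real.pi := ⟨le_refl 0, le_of_lt hπ⟩
  have hmemπ : Real.pi ∈ Set.Icc (0:ℝ) Real.pi := ⟨le_of_lt hπ, le_refl _⟩
  -- φ is an isometry
  have hφdist : ∀ x y : X, dist (φ x) (φ y) = dist x y := by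
    intro x y
    rw [show φ x = susp.pt x (Real.pi/2) from rfl, show φ y = susp.pt y (Real.pi/2) from rfl,
      susp.dist_eq x y _ _ hmemhalf hmemhalf]
    simp only [Real.cos_pi_div_two, Real.sin_pi_div_two, zero_mul, one_mul, zero_add, mul_zero]
    exact Real.arccos_cos dist_nonneg (by linarith [hdiam x y])
  have hφiso : Isometry φ := Isometry.of_dist_eq hφdist
  have hφm : Measurable φ := hφiso.continuous.measurable
  -- vertices
  have hO : ∀ y : X, susp.pt y 0 = O := by
    intro y
    refine dist_eq_zero.mp ?_
    rw [hOdef, susp.dist_eq y x₀ 0 0 hmem0 hmem0]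
    simp [Real.arccos_one]
  have hP : ∀ y : X, susp.pt y Real.pi = P := by
    intro y
    refine dist_eq_zero.mp ?_
    rw [hPdef, susp.dist_eq y x₀ _ _ hmemπ hmemπ]
    simp [Real.arccos_one]
  have hOP : O ≠ P := by
    have h : dist O P = Real.pi := by
      rw [hOdef, hPdef, susp.dist_eq _ _ _ _ hmem0 hmemπ]
      simp [Real.arccos_neg_one]
    intro h'
    rw [h', dist_self] at h
    linarith
  -- distances from equator
  have hkey : ∀ (x y : X) (s : ℝ), s ∈ Set.Icc (0:ℝ) Real.pi →
      dist (φ x) (susp.pt y s) = Real.arccos (Real.sin s * Real.cos (dist x y)) := by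
    intro x y s hs
    rw [show φ x = susp.pt x (Real.pi/2) from rfl, susp.dist_eq x y _ s hmemhalf hs]
    simp
  have hEO : ∀ x : X, dist (φ x) O = Real.pi / 2 := by
    intro x
    rw [hOdef, hkey x x₀ 0 hmem0]
    simp [Real.arccos_zero]
  have hEP : ∀ x : X, dist (φ x) P = Real.pi / 2 := by
    intro x
    rw [hPdef, hkey x x₀ _ hmemπ]
    simp [Real.arccos_zero]
  have hle : ∀ (x : X) (w : S), dist (φ x) w ≤ Real.pi / 2 := by
    intro x w
    obtain ⟨y, s, hs, rfl⟩ := susp.surj w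
    rw [hkey x y s hs]
    refine Real.arccos_le_pi_div_two.mpr (mul_nonneg (Real.sin_nonneg_of_nonneg_of_le_pi hs.1 hs.2) ?_)
    exact le_of_lt (Real.cos_pos_of_mem_Ioo ⟨by linarith [dist_nonneg (x := x) (y := y)], hdiam x y⟩)
  -- uniform diameter bound
  obtain ⟨⟨a, b⟩, hR⟩ := (continuous_dist (α := X)).exists_forall_ge'
    (Classical.arbitrary (X × X)) (by
      simp [Filter.cocompact_eq_bot])
  have hRlt : dist a b < Real.pi / 2 := hdiam a b
  have hcosR : 0 < Real.cos (dist a b) :=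
    Real.cos_pos_of_mem_Ioo ⟨by linarith [dist_nonneg (x := a) (y := b)], hRlt⟩
  -- strict bound away from vertices
  have hlt : ∀ w : S, w ∉ ({O, P} : Set S) →
      ∃ A : ℝ, 0 ≤ A ∧ A < Real.pi / 2 ∧ ∀ x : X, dist (φ x) w ≤ A := by
    intro w hw
    obtain ⟨y, s, hs, rfl⟩ := susp.surj w
    have hs0 : 0 < s := by
      rcases eq_or_lt_of_le hs.1 with h | h
      · exfalso; apply hw; left; rw [← h]; exact hO y
      · exact h
    have hsπ : s < Real.pi := by
      rcases eq_or_lt_of_le hs.2 with h | h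
      · exfalso; apply hw; right; rw [h]; exact (hP y) ▸ rfl
      · exact h
    have hsin : 0 < Real.sin s := Real.sin_pos_of_pos_of_lt_pi hs0 hsπ
    refine ⟨Real.arccos (Real.sin s * Real.cos (dist a b)), Real.arccos_nonneg _,
      Real.arccos_lt_pi_div_two.mpr (mul_pos hsin hcosR), fun x => ?_⟩
    rw [hkey x y s hs]
    have h1 : Real.sin s * Real.cos (dist a b) ≤ Real.sin s * Real.cos (dist x y) := by
      refine mul_le_mul_of_nonneg_left ?_ hsin.le
      exact Real.cos_le_cos_of_nonneg_of_le_pi (dist_nonneg (x := x) (y := y))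
        (by linarith) (hR (x, y))
    rw [Real.arccos_eq_pi_div_two_sub_arcsin, Real.arccos_eq_pi_div_two_sub_arcsin]
    linarith [Real.monotone_arcsin h1]
  -- measure-theoretic setup
  set ν : Measure S := ν₀.map φ with hνdef
  haveI hνprob : IsProbabilityMeasure ν := Measure.isProbabilityMeasure_map hφm.aemeasurable
  set E : Set S := Set.range φ with hEdef
  have hEmeas : MeasurableSet E := (isCompact_range hφiso.continuous).isClosed.measurableSet
  have hνE : ν Eᶜ = 0 := by
    rw [hνdef, Measure.map_apply hφm hEmeas.compl]
    have h : φ ⁻¹' Eᶜ = ∅ := Set.eq_empty_iff_forall_notMem.mpr (fun x hx => hx ⟨x, rfl⟩)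
    rw [h, measure_empty]
  set V : Set S := {O, P} with hVdef
  have hVmeas : MeasurableSet V := (Set.toFinite V).isClosed.measurableSet
  -- a.e. first coordinate in E
  have hfstE : ∀ γ : Measure (S × S), γ.map Prod.fst = ν → ∀ᵐ z ∂γ, z.1 ∈ E := by
    intro γ hγ
    refine ae_iff.mpr ?_
    have h2 : {z : S × S | ¬ z.1 ∈ E} = Prod.fst ⁻¹' Eᶜ := rfl
    rw [h2, ← Measure.map_apply measurable_fst hEmeas.compl, hγ, hνE]
  -- the integrand on X × S
  set f₀ : X × S → ℝ := fun q => dist (φ q.1) q.2 ^ p with hf₀def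
  have hf₀c : Continuous f₀ := by
    refine Continuous.rpow_const ?_ (fun q => Or.inr hp0.le)
    exact (hφiso.continuous.comp continuous_fst).dist continuous_snd
  have hf₀nonneg : ∀ q, 0 ≤ f₀ q := fun q => Real.rpow_nonneg dist_nonneg p
  have hf₀lehalf : ∀ q, f₀ q ≤ (Real.pi / 2) ^ p := fun q =>
    Real.rpow_le_rpow dist_nonneg (hle q.1 q.2) hp0.le
  set h : S → ℝ := fun w => ∫ x, f₀ (x, w) ∂ν₀ with hhdef
  have hhnonneg : ∀ w, 0 ≤ h w := fun w => integral_nonneg (fun x => hf₀nonneg _)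
  have hint_aux : ∀ (w : S) (C : ℝ), (∀ x : X, f₀ (x, w) ≤ C) → h w ≤ C := by
    intro w C hC
    have h0 : (0:ℝ) ≤ C := le_trans (hf₀nonneg (Classical.arbitrary X, w)) (hC _)
    have := norm_integral_le_of_norm_le_const (μ := ν₀) (C := C)
      (Filter.Eventually.of_forall (fun x => by
        rw [Real.norm_eq_abs, abs_of_nonneg (hf₀nonneg _)]; exact hC x))
    simp only [measure_univ, probReal_univ, mul_one] at this
    calc h w ≤ ‖h w‖ := le_abs_self _
    _ ≤ C := this
  have hhle : ∀ w, h w ≤ (Real.pi / 2) ^ p :=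
    fun w => hint_aux w _ (fun x => hf₀lehalf (x, w))
  have hhlt : ∀ w ∉ V, h w < (Real.pi / 2) ^ p := by
    intro w hw
    obtain ⟨A, hA0, hAlt, hA⟩ := hlt w hw
    calc h w ≤ A ^ p := hint_aux w _ (fun x => Real.rpow_le_rpow dist_nonneg (hA x) hp0.le)
    _ < (Real.pi / 2) ^ p := Real.rpow_lt_rpow hA0 hAlt hp0
  have hhsm : StronglyMeasurable h := hf₀c.stronglyMeasurable.integral_prod_left'
  have hpinv : ∀ x : ℝ, 0 ≤ x → (x ^ p) ^ (1/p) = x := by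
    intro x hx
    rw [← Real.rpow_mul hx, mul_one_div_cancel hpne, Real.rpow_one]
  -- the coupling cost sets
  set CS : Measure S → Set ℝ := fun μ => {c : ℝ | ∃ γ : Measure (S × S),
    IsProbabilityMeasure γ ∧ γ.map Prod.fst = ν ∧ γ.map Prod.snd = μ ∧
    c = (∫ z, dist z.1 z.2 ^ p ∂γ) ^ (1 / p)} with hCSdef
  have hWpeq : ∀ μ : Measure S, Wp (fun a b : S => dist a b) p ν μ = sInf (CS μ) :=
    fun μ => rfl
  have hbdd : ∀ μ : Measure S, BddBelow (CS μ) := by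
    intro μ
    refine ⟨0, ?_⟩
    rintro c ⟨γ, _, _, _, rfl⟩
    exact Real.rpow_nonneg (integral_nonneg fun z => Real.rpow_nonneg dist_nonneg p) _
  -- the product-type coupling
  have hφemb : MeasurableEmbedding φ := hφiso.isClosedEmbedding.measurableEmbedding
  set Φ : X × S → S × S := fun q => (φ q.1, q.2) with hΦdef
  have hΦm : Measurable Φ := (hφm.comp measurable_fst).prodMk measurable_snd
  have hΦemb : MeasurableEmbedding Φ := MeasurableEmbedding.prodMap
    hφemb (MeasurableEmbedding.id)
  have hmem : ∀ μ : Measure S, IsProbabilityMeasure μ →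
      (∫ w, h w ∂μ) ^ (1/p) ∈ CS μ := by
    intro μ hμ
    haveI := hμ
    have hf₀i : Integrable f₀ (ν₀.prod μ) := by
      refine ⟨hf₀c.aestronglyMeasurable, HasFiniteIntegral.of_bounded
        (C := (Real.pi/2) ^ p) (Filter.Eventually.of_forall fun q => ?_)⟩
      rw [Real.norm_eq_abs, abs_of_nonneg (hf₀nonneg q)]
      exact hf₀lehalf q
    refine ⟨(ν₀.prod μ).map Φ, Measure.isProbabilityMeasure_map hΦm.aemeasurable, ?_, ?_, ?_⟩
    · rw [Measure.map_map measurable_fst hΦm]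
      have h1 : Prod.fst ∘ Φ = φ ∘ Prod.fst := rfl
      rw [h1, ← Measure.map_map hφm measurable_fst]
      simp [hνdef]
    · rw [Measure.map_map measurable_snd hΦm]
      have h1 : Prod.snd ∘ Φ = Prod.snd := rfl
      rw [h1]
      simp
    · have h2 : ∫ z, dist z.1 z.2 ^ p ∂((ν₀.prod μ).map Φ) = ∫ w, h w ∂μ := by
        rw [hΦemb.integral_map]
        exact integral_prod_symm f₀ hf₀i
      rw [h2]
  have hintnn : ∀ μ : Measure S, 0 ≤ ∫ w, h w ∂μ :=
    fun μ => integral_nonneg fun w => hhnonneg w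
  have hintle : ∀ μ : Measure S, IsProbabilityMeasure μ → ∫ w, h w ∂μ ≤ (Real.pi/2) ^ p := by
    intro μ hμ
    haveI := hμ
    have := norm_integral_le_of_norm_le_const (μ := μ) (C := (Real.pi/2) ^ p)
      (Filter.Eventually.of_forall (fun w => by
        rw [Real.norm_eq_abs, abs_of_nonneg (hhnonneg w)]; exact hhle w))
    simp only [measure_univ, probReal_univ, mul_one] at this
    exact le_trans (le_abs_self _) this
  have hcostle : ∀ μ : Measure S, IsProbabilityMeasure μ →
      (∫ w, h w ∂μ) ^ (1/p) ≤ Real.pi / 2 := by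
    intro μ hμ
    calc (∫ w, h w ∂μ) ^ (1/p) ≤ ((Real.pi/2) ^ p) ^ (1/p) :=
        Real.rpow_le_rpow (hintnn μ) (hintle μ hμ) (by positivity)
    _ = Real.pi / 2 := hpinv _ (by positivity)
  have part1 : ∀ μ : Measure S, IsProbabilityMeasure μ →
      Wp (fun a b : S => dist a b) p ν μ ≤ Real.pi / 2 := by
    intro μ hμ
    rw [hWpeq]
    exact le_trans (csInf_le (hbdd μ) (hmem μ hμ)) (hcostle μ hμ)
  -- measures concentrated on the vertices have Wp exactly π/2
  have hA : ∀ μ : Measure S, IsProbabilityMeasure μ → μ Vᶜ = 0 →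
      Wp (fun a b : S => dist a b) p ν μ = Real.pi / 2 := by
    intro μ hμ hμV
    haveI := hμ
    have hall : ∀ c ∈ CS μ, c = Real.pi / 2 := by
      rintro c ⟨γ, hγi, hγ1, hγ2, rfl⟩
      haveI := hγi
      have h1 : ∀ᵐ z ∂γ, z.1 ∈ E := hfstE γ hγ1
      have h2 : ∀ᵐ z ∂γ, z.2 ∈ V := by
        refine ae_iff.mpr ?_
        have h3 : {z : S × S | ¬ z.2 ∈ V} = Prod.snd ⁻¹' Vᶜ := rfl
        rw [h3, ← Measure.map_apply measurable_snd hVmeas.compl, hγ2, hμV]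
      have h3 : (fun z : S × S => dist z.1 z.2 ^ p) =ᵐ[γ]
          (fun _ => (Real.pi/2) ^ p) := by
        filter_upwards [h1, h2] with z hz1 hz2
        obtain ⟨x, hx⟩ := hz1
        rcases hz2 with hz | hz
        · rw [← hx, hz, hEO x]
        · rw [← hx, (show z.2 = P from hz), hEP x]
      have h4 : ∫ z, dist z.1 z.2 ^ p ∂γ = (Real.pi/2) ^ p := by
        rw [integral_congr_ae h3, integral_const]
        simp
      rw [h4, hpinv _ (by positivity)]
    rw [hWpeq]
    refine le_antisymm ?_ (le_csInf ⟨_, hmem μ hμ⟩ fun c hc => (hall c hc).ge)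
    exact le_of_le_of_eq (csInf_le (hbdd μ) (hmem μ hμ)) (hall _ (hmem μ hμ))
  -- vertex combinations
  have hcomboV : ∀ lam : ℝ, (ENNReal.ofReal (1 - lam) • Measure.dirac O +
      ENNReal.ofReal lam • Measure.dirac P) Vᶜ = 0 := by
    intro lam
    rw [Measure.add_apply, Measure.smul_apply, Measure.smul_apply,
      Measure.dirac_apply' _ hVmeas.compl, Measure.dirac_apply' _ hVmeas.compl,
      Set.indicator_of_notMem (by simp [hVdef] : O ∉ Vᶜ),
      Set.indicator_of_notMem (by simp [hVdef] : P ∉ Vᶜ)]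
    simp
  have hcomboprob : ∀ lam ∈ Set.Icc (0:ℝ) 1, IsProbabilityMeasure
      (ENNReal.ofReal (1 - lam) • Measure.dirac O + ENNReal.ofReal lam • Measure.dirac P) := by
    rintro lam ⟨h0, h1⟩
    constructor
    rw [Measure.add_apply, Measure.smul_apply, Measure.smul_apply]
    simp only [Measure.dirac_apply_of_mem (Set.mem_univ _), smul_eq_mul, mul_one]
    rw [← ENNReal.ofReal_add (by linarith) h0]
    norm_num
  -- forward direction: the maximum forces concentration on the vertices
  have part3fwd : ∀ μ : Measure S, IsProbabilityMeasure μ →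
      Wp (fun a b : S => dist a b) p ν μ = Real.pi / 2 → μ Vᶜ = 0 := by
    intro μ hμ hW
    haveI := hμ
    have hcost : (∫ w, h w ∂μ) ^ (1/p) = Real.pi / 2 := by
      refine le_antisymm (hcostle μ hμ) ?_
      rw [hWpeq] at hW
      exact hW ▸ csInf_le (hbdd μ) (hmem μ hμ)
    have hint : ∫ w, h w ∂μ = (Real.pi/2) ^ p := by
      have h5 := congrArg (fun t : ℝ => t ^ p) hcost
      rwa [← Real.rpow_mul (hintnn μ), one_div_mul_cancel hpne, Real.rpow_one] at h5
    have hh_int : Integrable h μ := by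
      refine ⟨hhsm.aestronglyMeasurable, HasFiniteIntegral.of_bounded
        (C := (Real.pi/2) ^ p) (Filter.Eventually.of_forall fun w => ?_)⟩
      rw [Real.norm_eq_abs, abs_of_nonneg (hhnonneg w)]
      exact hhle w
    have h6 : ∫ w, ((Real.pi/2) ^ p - h w) ∂μ = 0 := by
      rw [integral_sub (integrable_const _) hh_int, integral_const]
      simp [hint]
    have h7 : (fun w => (Real.pi/2) ^ p - h w) =ᵐ[μ] 0 :=
      (integral_eq_zero_iff_of_nonneg (fun w => sub_nonneg.mpr (hhle w))
        ((integrable_const _).sub hh_int)).mp h6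
    have h9 : ∀ᵐ w ∂μ, (Real.pi/2) ^ p - h w = 0 := by
      filter_upwards [h7] with w hw using by simpa using hw
    refine measure_mono_null ?_ (ae_iff.mp h9)
    intro w hw
    have h10 := hhlt w hw
    simp only [Set.mem_setOf_eq]
    intro hc
    linarith
  -- representation of measures concentrated on the two vertices
  have hrep : ∀ μ : Measure S, IsProbabilityMeasure μ → μ Vᶜ = 0 →
      ∃ lam : ℝ, lam ∈ Set.Icc (0:ℝ) 1 ∧
        μ = ENNReal.ofReal (1 - lam) • Measure.dirac O +
          ENNReal.ofReal lam • Measure.dirac P := by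
    intro μ hμ hμV
    haveI := hμ
    have hOmeas : MeasurableSet ({O} : Set S) := isClosed_singleton.measurableSet
    have hPmeas : MeasurableSet ({P} : Set S) := isClosed_singleton.measurableSet
    have hsum : μ {O} + μ {P} = 1 := by
      have hunion : μ V = μ {O} + μ {P} := by
        rw [hVdef, Set.insert_eq, measure_union (Set.disjoint_singleton.mpr hOP) hPmeas]
      have huniv : μ V = 1 := by
        have h10 := measure_add_measure_compl (μ := μ) hVmeas
        rw [hμV, add_zero, measure_univ] at h10
        exact h10
      rw [← hunion, huniv]
    have hPle : μ {P} ≤ 1 := prob_le_one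
    have hPne : μ {P} ≠ ⊤ := (lt_of_le_of_lt hPle ENNReal.one_lt_top).ne
    set lam : ℝ := (μ {P}).toReal with hlamdef
    have hlam0 : 0 ≤ lam := ENNReal.toReal_nonneg
    have hlam1 : lam ≤ 1 := by
      rw [hlamdef, ← ENNReal.toReal_one]
      exact ENNReal.toReal_mono ENNReal.one_ne_top hPle
    have hofP : ENNReal.ofReal lam = μ {P} := ENNReal.ofReal_toReal hPne
    have hOeq : μ {O} = 1 - μ {P} := ENNReal.eq_sub_of_add_eq hPne hsum
    have hofO : ENNReal.ofReal (1 - lam) = μ {O} := by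
      rw [ENNReal.ofReal_sub _ hlam0, ENNReal.ofReal_one, hofP, hOeq]
    refine ⟨lam, ⟨hlam0, hlam1⟩, ?_⟩
    ext s hs
    have hμs : μ s = μ (s ∩ V) := by
      have h9 := measure_inter_add_diff (μ := μ) s hVmeas
      have h10 : μ (s \ V) = 0 := measure_mono_null (fun w hw => hw.2) hμV
      rw [← h9, h10, add_zero]
    have hsplit : μ (s ∩ V) = μ (s ∩ {O}) + μ (s ∩ {P}) := by
      rw [hVdef, Set.insert_eq, Set.inter_union_distrib_left]
      exact measure_union ((Set.disjoint_singleton.mpr hOP).mono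
        Set.inter_subset_right Set.inter_subset_right) (hs.inter hPmeas)
    have hsO : μ (s ∩ {O}) = if O ∈ s then μ {O} else 0 := by
      split_ifs with hOs
      · rw [Set.inter_eq_self_of_subset_right (Set.singleton_subset_iff.mpr hOs)]
      · rw [Set.inter_singleton_eq_empty.mpr hOs, measure_empty]
    have hsP : μ (s ∩ {P}) = if P ∈ s then μ {P} else 0 := by
      split_ifs with hPs
      · rw [Set.inter_eq_self_of_subset_right (Set.singleton_subset_iff.mpr hPs)]
      · rw [Set.inter_singleton_eq_empty.mpr hPs, measure_empty]
    rw [Measure.add_apply, Measure.smul_apply, Measure.smul_apply,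
      Measure.dirac_apply' _ hs, Measure.dirac_apply' _ hs, smul_eq_mul, smul_eq_mul,
      hofO, hofP, hμs, hsplit, hsO, hsP, Set.indicator_apply, Set.indicator_apply]
    split_ifs <;> simp
  -- assembly
  refine ⟨part1, ?_, ?_⟩
  · refine ⟨Measure.dirac O, inferInstance, ?_⟩
    refine hA _ inferInstance ?_
    rw [Measure.dirac_apply' _ hVmeas.compl,
      Set.indicator_of_notMem (by simp [hVdef] : O ∉ Vᶜ)]
  · intro μ hμ
    constructor
    · intro hW
      exact hrep μ hμ (part3fwd μ hμ hW)
    · rintro ⟨lam, hlam, rfl⟩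
      exact hA _ (hcomboprob lam hlam) (hcomboV lam)
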